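/- Let Θ_u, Θ_v be diagonal n×n matrices with positive diagonal entries, let A be a real m×n matrix with orthonormal rows (AAᵀ = I_m) and m ≤ n/2, and set ρ = m/n. Define the 2n×2n block matrices H = [[Θ_u⁻¹ + AᵀA, −AᵀA],[−AᵀA, Θ_v⁻¹ + AᵀA]] and P = [[Θ_u⁻¹ + ρIₙ, −ρIₙ],[−ρIₙ, Θ_v⁻¹ + ρIₙ]]. Let Θ = Θ_u + Θ_v, let C > 0, let l = #{j : Θⱼ⁻¹ < C}, and suppose there exists 0 < δ_l < 1 such that every m×l submatrix B formed of l distinct columns of A satisfies ‖(n/m)·BᵀB − I_l‖₂ ≤ δ_l. Then every eigenvalue λ of P⁻¹H either equals 1 or satisfies |λ − 1| ≤ δ_l + (1/4)·(3 − ρ)²/(ρ δ_l C). -/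

import Mathlib

open scoped BigOperators Matrix.Norms.L2Operator
open Matrix

/-- Property P2: every `m × k` submatrix `B` formed of `k` distinct columns of `A`
satisfies `‖(n/m)·BᵀB − I_k‖₂ ≤ δ` (the norm is the spectral norm). -/
def PropP2 (m n k : ℕ) (A : Matrix (Fin m) (Fin n) ℝ) (δ : ℝ) : Prop :=
  ∀ g : Fin k → Fin n, Function.Injective g →
    ‖((n : ℝ) / m) • ((A.submatrix id g)ᵀ * (A.submatrix id g)) - 1‖ ≤ δ

section helpers

lemma dot_eq_inner {k : ℕ} (c x' : Fin k → ℝ) :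
    c ⬝ᵥ x' = (inner ℝ ((EuclideanSpace.equiv (Fin k) ℝ).symm c) ((EuclideanSpace.equiv (Fin k) ℝ).symm x') : ℝ) := by
  simp only [PiLp.inner_apply, RCLike.inner_apply, dotProduct, starRingEnd_apply, star_trivial]
  exact Finset.sum_congr rfl fun i _ => mul_comm _ _

lemma quad_bound {k : ℕ} (M : Matrix (Fin k) (Fin k) ℝ) (c : Fin k → ℝ) :
    |c ⬝ᵥ M.mulVec c| ≤ ‖M‖ * (c ⬝ᵥ c) := by
  set x : EuclideanSpace ℝ (Fin k) := (EuclideanSpace.equiv (Fin k) ℝ).symm c with hx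
  set y : EuclideanSpace ℝ (Fin k) := (EuclideanSpace.equiv (Fin k) ℝ).symm (M.mulVec c) with hy
  have h1 : c ⬝ᵥ M.mulVec c = (inner ℝ x y : ℝ) := dot_eq_inner c (M.mulVec c)
  have h2 : |(inner ℝ x y : ℝ)| ≤ ‖x‖ * ‖y‖ := abs_real_inner_le_norm x y
  have h3 : ‖y‖ ≤ ‖M‖ * ‖x‖ := M.l2_opNorm_mulVec x
  have h4 : ‖x‖ ^ 2 = c ⬝ᵥ c := by
    rw [dot_eq_inner c c, real_inner_self_eq_norm_sq]
  have hxn : 0 ≤ ‖x‖ := norm_nonneg x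
  calc |c ⬝ᵥ M.mulVec c| = |(inner ℝ x y : ℝ)| := by rw [h1]
    _ ≤ ‖x‖ * ‖y‖ := h2
    _ ≤ ‖x‖ * (‖M‖ * ‖x‖) := by nlinarith [norm_nonneg y, norm_nonneg M]
    _ = ‖M‖ * ‖x‖ ^ 2 := by ring
    _ = ‖M‖ * (c ⬝ᵥ c) := by rw [h4]

lemma dot_tA {m n : ℕ} (A : Matrix (Fin m) (Fin n) ℝ) (u w : Fin n → ℝ) :
    u ⬝ᵥ ((Aᵀ * A) *ᵥ w) = (A *ᵥ u) ⬝ᵥ (A *ᵥ w) := by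
  rw [← mulVec_mulVec, dotProduct_mulVec, vecMul_transpose]

lemma dotProduct_self_nonneg' {k : ℕ} (u : Fin k → ℝ) : 0 ≤ u ⬝ᵥ u :=
  Finset.sum_nonneg fun i _ => mul_self_nonneg _

lemma contraction {m n : ℕ} (A : Matrix (Fin m) (Fin n) ℝ) (hortho : A * Aᵀ = 1)
    (u : Fin n → ℝ) : (A *ᵥ u) ⬝ᵥ (A *ᵥ u) ≤ u ⬝ᵥ u := by
  set p := (Aᵀ * A) *ᵥ u with hp
  have hpu : u ⬝ᵥ p = (A *ᵥ u) ⬝ᵥ (A *ᵥ u) := dot_tA A u u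
  have hAp : A *ᵥ p = A *ᵥ u := by
    rw [hp, mulVec_mulVec, ← Matrix.mul_assoc, hortho, Matrix.one_mul]
  have hpp : p ⬝ᵥ p = (A *ᵥ u) ⬝ᵥ (A *ᵥ u) := by
    rw [hp]
    rw [dot_tA A ((Aᵀ * A) *ᵥ u) u, ← hp, hAp]
  have h0 : 0 ≤ (u - p) ⬝ᵥ (u - p) := dotProduct_self_nonneg' _
  have hexp : (u - p) ⬝ᵥ (u - p) = u ⬝ᵥ u - u ⬝ᵥ p - p ⬝ᵥ u + p ⬝ᵥ p := by
    rw [sub_dotProduct, dotProduct_sub, dotProduct_sub]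
    ring
  have hcomm : p ⬝ᵥ u = u ⬝ᵥ p := dotProduct_comm p u
  linarith [h0, hexp ▸ h0]

lemma rip {m n l : ℕ} (A : Matrix (Fin m) (Fin n) ℝ) {δ : ℝ}
    (hP2 : PropP2 m n l A δ) (g : Fin l → Fin n) (hg : Function.Injective g)
    (c : Fin l → ℝ) :
    |((n:ℝ)/m) * ((A.submatrix id g *ᵥ c) ⬝ᵥ (A.submatrix id g *ᵥ c)) - c ⬝ᵥ c| ≤ δ * (c ⬝ᵥ c) := by
  set B := A.submatrix id g with hB
  set M := ((n : ℝ) / m) • (Bᵀ * B) - 1 with hM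
  have h1 : c ⬝ᵥ M *ᵥ c = ((n:ℝ)/m) * ((B *ᵥ c) ⬝ᵥ (B *ᵥ c)) - c ⬝ᵥ c := by
    rw [hM, sub_mulVec, dotProduct_sub, one_mulVec, smul_mulVec, dotProduct_smul,
      dot_tA B c c]
    simp [smul_eq_mul]
  have h2 := quad_bound M c
  rw [h1] at h2
  have h3 := hP2 g hg
  have hcc : 0 ≤ c ⬝ᵥ c := dotProduct_self_nonneg' c
  calc |((n:ℝ)/m) * ((B *ᵥ c) ⬝ᵥ (B *ᵥ c)) - c ⬝ᵥ c| ≤ ‖M‖ * (c ⬝ᵥ c) := h2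
    _ ≤ δ * (c ⬝ᵥ c) := mul_le_mul_of_nonneg_right h3 hcc

lemma scalar_ineq (ρ δ C s t : ℝ) (hρ0 : 0 < ρ) (hρ : ρ ≤ 1/2) (hδ0 : 0 < δ) (hδ1 : δ < 1)
    (hC : 0 < C) (hs : 0 ≤ s) (ht : 0 ≤ t) :
    ρ*δ*s^2 + 2*Real.sqrt (ρ*(1+δ))*s*t + t^2
      ≤ (δ + (1/4)*(3-ρ)^2/(ρ*δ*C)) * (ρ*s^2 + C*t^2) := by
  set a := Real.sqrt (ρ*(1+δ)) with ha
  have ha0 : 0 ≤ a := Real.sqrt_nonneg _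
  have ha2 : a^2 = ρ*(1+δ) := Real.sq_sqrt (by nlinarith)
  set α := (3-ρ)^2/(4*δ*C) with hα
  have hα0 : 0 < α := by
    have h30 : (0:ℝ) < (3-ρ)^2 := by nlinarith
    exact div_pos h30 (by positivity)
  have hamgm : 2*a*s*t ≤ α*s^2 + (a^2/α)*t^2 := by
    have h := sq_nonneg (α*s - a*t)
    have : α*(2*a*s*t) ≤ α*(α*s^2 + (a^2/α)*t^2) := by
      have hαne : α ≠ 0 := ne_of_gt hα0
      field_simp
      nlinarith [sq_nonneg (α*s - a*t)]
    exact le_of_mul_le_mul_left this hα0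
  have hcoef1 : ρ*δ + α = (δ + (1/4)*(3-ρ)^2/(ρ*δ*C)) * ρ := by
    rw [hα]
    field_simp
  have hcoef2 : 1 + a^2/α ≤ (δ + (1/4)*(3-ρ)^2/(ρ*δ*C)) * C := by
    rw [ha2, hα]
    have h1 : (3-ρ)^2 ≥ 25/4 := by nlinarith
    have h2 : ρ*(1+δ)/((3-ρ)^2/(4*δ*C)) = 4*ρ*(1+δ)*δ*C/(3-ρ)^2 := by
      field_simp
    rw [h2]
    have h3 : 4*ρ*(1+δ)*δ*C/(3-ρ)^2 ≤ δ*C := by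
      rw [div_le_iff₀ (by nlinarith)]
      have hb : 4*ρ*(1+δ) ≤ 4 := by nlinarith
      have hc : (0:ℝ) < δ*C := mul_pos hδ0 hC
      nlinarith
    have h4 : (1:ℝ) ≤ (1/4)*(3-ρ)^2/(ρ*δ) := by
      rw [le_div_iff₀ (by positivity)]
      nlinarith
    have h5 : (δ + (1/4)*(3-ρ)^2/(ρ*δ*C)) * C = δ*C + (1/4)*(3-ρ)^2/(ρ*δ) := by
      field_simp
    rw [h5]
    linarith
  have hstep2 : (1 + a^2/α)*t^2 ≤ ((δ + (1/4)*(3-ρ)^2/(ρ*δ*C)) * C)*t^2 :=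
    mul_le_mul_of_nonneg_right hcoef2 (sq_nonneg t)
  calc ρ*δ*s^2 + 2*a*s*t + t^2
      ≤ ρ*δ*s^2 + (α*s^2 + (a^2/α)*t^2) + t^2 := by linarith
    _ = (ρ*δ + α)*s^2 + (1 + a^2/α)*t^2 := by ring
    _ ≤ ((δ + (1/4)*(3-ρ)^2/(ρ*δ*C)) * ρ)*s^2 + ((δ + (1/4)*(3-ρ)^2/(ρ*δ*C)) * C)*t^2 := by
        rw [hcoef1]
        exact add_le_add le_rfl hstep2
    _ = (δ + (1/4)*(3-ρ)^2/(ρ*δ*C)) * (ρ*s^2 + C*t^2) := by ring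

lemma eig_one {N : Type*} [Fintype N] (v : N → ℝ) (lam : ℝ) (hv0 : v ≠ 0)
    (h : lam • v = v) : lam = 1 := by
  by_contra hlam
  have h2 : (lam - 1) • v = 0 := by
    rw [sub_smul, one_smul, h, sub_self]
  rcases smul_eq_zero.mp h2 with h3 | h3
  · exact hlam (by linarith [sub_eq_zero.mp (by exact h3)])
  · exact hv0 h3

lemma blockMulVec {n : ℕ} (D1 D2 : Fin n → ℝ) (M : Matrix (Fin n) (Fin n) ℝ)
    (u : Fin n ⊕ Fin n → ℝ) :
    (Matrix.fromBlocks (Matrix.diagonal D1 + M) (-M) (-M) (Matrix.diagonal D2 + M)) *ᵥ u =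
      Sum.elim
        (fun j => D1 j * u (Sum.inl j) + (M *ᵥ (fun i => u (Sum.inl i) - u (Sum.inr i))) j)
        (fun j => D2 j * u (Sum.inr j) - (M *ᵥ (fun i => u (Sum.inl i) - u (Sum.inr i))) j) := by
  rw [Matrix.fromBlocks_mulVec]
  have hsub : M *ᵥ (fun i => u (Sum.inl i) - u (Sum.inr i))
      = M *ᵥ (u ∘ Sum.inl) - M *ᵥ (u ∘ Sum.inr) := by
    rw [← Matrix.mulVec_sub]
    rfl
  funext i
  cases i with
  | inl j =>
    simp only [Sum.elim_inl, Matrix.add_mulVec, Matrix.neg_mulVec, Pi.add_apply, Pi.neg_apply,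
      hsub, Pi.sub_apply, Matrix.mulVec_diagonal, Function.comp_apply]
    ring
  | inr j =>
    simp only [Sum.elim_inr, Matrix.add_mulVec, Matrix.neg_mulVec, Pi.add_apply, Pi.neg_apply,
      hsub, Pi.sub_apply, Matrix.mulVec_diagonal, Function.comp_apply]
    ring

lemma dot_sum_split {n : ℕ} (a b : Fin n ⊕ Fin n → ℝ) :
    a ⬝ᵥ b = (∑ j, a (Sum.inl j) * b (Sum.inl j)) + ∑ j, a (Sum.inr j) * b (Sum.inr j) := by
  simp [dotProduct, Fintype.sum_sum_type]

lemma Pquad {n : ℕ} (D1 D2 : Fin n → ℝ) (ρ : ℝ) (u : Fin n ⊕ Fin n → ℝ) :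
    u ⬝ᵥ ((Matrix.fromBlocks (Matrix.diagonal D1 + ρ • (1 : Matrix (Fin n) (Fin n) ℝ))
        (-(ρ • (1 : Matrix (Fin n) (Fin n) ℝ))) (-(ρ • (1 : Matrix (Fin n) (Fin n) ℝ)))
        (Matrix.diagonal D2 + ρ • (1 : Matrix (Fin n) (Fin n) ℝ))) *ᵥ u)
      = ∑ j, (D1 j * u (Sum.inl j) ^ 2 + D2 j * u (Sum.inr j) ^ 2
          + ρ * (u (Sum.inl j) - u (Sum.inr j)) ^ 2) := by
  rw [blockMulVec, dot_sum_split]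
  have hsm : ∀ w : Fin n → ℝ, (ρ • (1 : Matrix (Fin n) (Fin n) ℝ)) *ᵥ w = fun j => ρ * w j := by
    intro w
    funext j
    rw [Matrix.smul_mulVec, Matrix.one_mulVec]
    rfl
  simp only [Sum.elim_inl, Sum.elim_inr, hsm]
  rw [← Finset.sum_add_distrib]
  apply Finset.sum_congr rfl
  intro j _
  ring

lemma Ppd {n : ℕ} (du dv : Fin n → ℝ) (hdu : ∀ j, 0 < du j) (hdv : ∀ j, 0 < dv j)
    (ρ : ℝ) (hρ : 0 ≤ ρ) :
    (Matrix.fromBlocks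
        (Matrix.diagonal (fun j => (du j)⁻¹) + ρ • (1 : Matrix (Fin n) (Fin n) ℝ))
        (-(ρ • (1 : Matrix (Fin n) (Fin n) ℝ)))
        (-(ρ • (1 : Matrix (Fin n) (Fin n) ℝ)))
        (Matrix.diagonal (fun j => (dv j)⁻¹) + ρ • (1 : Matrix (Fin n) (Fin n) ℝ))).PosDef := by
  rw [Matrix.posDef_iff_dotProduct_mulVec]
  constructor
  · show _ = _
    rw [Matrix.conjTranspose_eq_transpose_of_trivial, Matrix.fromBlocks_transpose]
    rw [Matrix.transpose_add, Matrix.transpose_add, Matrix.diagonal_transpose,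
      Matrix.diagonal_transpose, Matrix.transpose_neg, Matrix.transpose_smul,
      Matrix.transpose_one]
  · intro u hu
    rw [star_trivial, Pquad]
    have hterm : ∀ j, 0 ≤ (du j)⁻¹ * u (Sum.inl j) ^ 2 + (dv j)⁻¹ * u (Sum.inr j) ^ 2
        + ρ * (u (Sum.inl j) - u (Sum.inr j)) ^ 2 := by
      intro j
      have h1 := hdu j
      have h2 := hdv j
      positivity
    obtain ⟨i, hi⟩ := Function.ne_iff.mp hu
    apply Finset.sum_pos'
    · exact fun j _ => hterm j
    · cases i with
      | inl j =>
        refine ⟨j, Finset.mem_univ j, ?_⟩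
        have h1 := hdu j
        have h2 := hdv j
        have h4 : 0 < u (Sum.inl j) ^ 2 :=
          lt_of_le_of_ne (sq_nonneg _) (Ne.symm (pow_ne_zero 2 hi))
        have h3 : 0 < (du j)⁻¹ * u (Sum.inl j) ^ 2 := mul_pos (inv_pos.mpr h1) h4
        nlinarith [mul_nonneg (inv_nonneg.mpr h2.le) (sq_nonneg (u (Sum.inr j))),
          mul_nonneg hρ (sq_nonneg (u (Sum.inl j) - u (Sum.inr j)))]
      | inr j =>
        refine ⟨j, Finset.mem_univ j, ?_⟩
        have h1 := hdu j
        have h2 := hdv j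
        have h4 : 0 < u (Sum.inr j) ^ 2 :=
          lt_of_le_of_ne (sq_nonneg _) (Ne.symm (pow_ne_zero 2 hi))
        have h3 : 0 < (dv j)⁻¹ * u (Sum.inr j) ^ 2 := mul_pos (inv_pos.mpr h2) h4
        nlinarith [mul_nonneg (inv_nonneg.mpr h1.le) (sq_nonneg (u (Sum.inl j))),
          mul_nonneg hρ (sq_nonneg (u (Sum.inl j) - u (Sum.inr j)))]

lemma sum_enum {n l : ℕ} (S : Finset (Fin n)) (hS : S.card = l) (f : Fin n → ℝ) :
    ∑ i : Fin l, f ((S.orderIsoOfFin hS i : Fin n)) = ∑ j ∈ S, f j := by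
  rw [← Finset.sum_coe_sort S f]
  exact Fintype.sum_equiv (S.orderIsoOfFin hS).toEquiv _ _ (fun i => rfl)

end helpers

set_option maxHeartbeats 2000000 in
/-- Eigenvalue clustering for the `2n × 2n` block preconditioned
matrix `P⁻¹H`: every eigenvalue either equals 1 or lies within
`δ_l + (1/4)(3−ρ)²/(ρ δ_l C)` of 1, where `ρ = m/n`, `Θ = Θ_u + Θ_v` and `A` has
orthonormal rows. -/
theorem block_eigenvalue_clustering
    (m n : ℕ) (hmn : 2 * m ≤ n)
    (du dv : Fin n → ℝ) (hdu : ∀ j, 0 < du j) (hdv : ∀ j, 0 < dv j)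
    (A : Matrix (Fin m) (Fin n) ℝ)
    (hortho : A * Aᵀ = 1)
    (C : ℝ) (hC : 0 < C)
    (l : ℕ) (hl : l = (Finset.univ.filter fun j => (du j + dv j)⁻¹ < C).card)
    (δl : ℝ) (hδl0 : 0 < δl) (hδl1 : δl < 1)
    (hP2 : PropP2 m n l A δl) :
    let ρ : ℝ := (m : ℝ) / n
    let H : Matrix (Fin n ⊕ Fin n) (Fin n ⊕ Fin n) ℝ :=
      Matrix.fromBlocks (Matrix.diagonal (fun j => (du j)⁻¹) + Aᵀ * A) (-(Aᵀ * A))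
        (-(Aᵀ * A)) (Matrix.diagonal (fun j => (dv j)⁻¹) + Aᵀ * A)
    let P : Matrix (Fin n ⊕ Fin n) (Fin n ⊕ Fin n) ℝ :=
      Matrix.fromBlocks
        (Matrix.diagonal (fun j => (du j)⁻¹) + ρ • (1 : Matrix (Fin n) (Fin n) ℝ))
        (-(ρ • (1 : Matrix (Fin n) (Fin n) ℝ)))
        (-(ρ • (1 : Matrix (Fin n) (Fin n) ℝ)))
        (Matrix.diagonal (fun j => (dv j)⁻¹) + ρ • (1 : Matrix (Fin n) (Fin n) ℝ))
    ∀ lam : ℝ,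
      (∃ v : Fin n ⊕ Fin n → ℝ, v ≠ 0 ∧ (P⁻¹ * H).mulVec v = lam • v) →
      lam = 1 ∨ |lam - 1| ≤ δl + (1 / 4) * (3 - ρ) ^ 2 / (ρ * δl * C) := by
  intro ρ H P lam hex
  obtain ⟨v, hv0, hev⟩ := hex
  rcases Nat.eq_zero_or_pos m with hm0 | hm
  · -- degenerate case m = 0 : H = P and every eigenvalue is 1
    left
    subst hm0
    have hρ : ρ = 0 := by show (0:ℕ) / (n:ℝ) = 0; simp
    have hA0 : Aᵀ * A = 0 := by ext j k; simp [Matrix.mul_apply]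
    set d : Fin n ⊕ Fin n → ℝ := Sum.elim (fun j => (du j)⁻¹) (fun j => (dv j)⁻¹) with hd
    have hH : H = Matrix.diagonal d := by
      show Matrix.fromBlocks _ _ _ _ = _
      rw [hA0]
      simp [hd]
    have hP : P = Matrix.diagonal d := by
      show Matrix.fromBlocks _ _ _ _ = _
      rw [hρ]
      simp [hd]
    have hd0 : ∀ i, d i ≠ 0 := by
      intro i
      cases i with
      | inl j => simpa [hd] using inv_ne_zero (hdu j).ne'
      | inr j => simpa [hd] using inv_ne_zero (hdv j).ne'
    have hdet : IsUnit P.det := by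
      rw [hP, Matrix.det_diagonal]
      exact (Finset.prod_ne_zero_iff.mpr fun i _ => hd0 i).isUnit
    have hPH : P⁻¹ * H = 1 := by
      rw [hH, ← hP]
      exact Matrix.nonsing_inv_mul P hdet
    rw [hPH, Matrix.one_mulVec] at hev
    exact eig_one v lam hv0 hev.symm
  · -- main case m ≥ 1
    have hn : 0 < n := by omega
    have hρdef : ρ = (m:ℝ)/n := rfl
    have hn' : (0:ℝ) < n := by exact_mod_cast hn
    have hm' : (0:ℝ) < m := by exact_mod_cast hm
    have hρ0 : 0 < ρ := div_pos hm' hn'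
    have hρhalf : ρ ≤ 1/2 := by
      rw [hρdef, div_le_iff₀ hn']
      have : (2*m : ℝ) ≤ n := by exact_mod_cast hmn
      linarith
    have hPpd : P.PosDef := Ppd du dv hdu hdv ρ hρ0.le
    have hdet : IsUnit P.det := hPpd.det_pos.ne'.isUnit
    have hHv : H *ᵥ v = lam • (P *ᵥ v) := by
      calc H *ᵥ v = ((P * P⁻¹) * H) *ᵥ v := by
            rw [Matrix.mul_nonsing_inv _ hdet, Matrix.one_mul]
        _ = P *ᵥ ((P⁻¹ * H) *ᵥ v) := by rw [Matrix.mul_assoc, ← Matrix.mulVec_mulVec]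
        _ = P *ᵥ (lam • v) := by rw [hev]
        _ = lam • (P *ᵥ v) := Matrix.mulVec_smul P lam v
    set w : Fin n → ℝ := fun i => v (Sum.inl i) - v (Sum.inr i) with hwdef
    have hsm : ∀ u : Fin n → ℝ, (ρ • (1 : Matrix (Fin n) (Fin n) ℝ)) *ᵥ u = fun j => ρ * u j := by
      intro u
      funext j
      rw [Matrix.smul_mulVec, Matrix.one_mulVec]
      rfl
    have hHside := blockMulVec (fun j => (du j)⁻¹) (fun j => (dv j)⁻¹) (Aᵀ * A) v
    have hPside := blockMulVec (fun j => (du j)⁻¹) (fun j => (dv j)⁻¹)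
      (ρ • (1 : Matrix (Fin n) (Fin n) ℝ)) v
    rw [hHside, hPside] at hHv
    have E1 : ∀ j, (du j)⁻¹ * v (Sum.inl j) + ((Aᵀ*A) *ᵥ w) j
        = lam * ((du j)⁻¹ * v (Sum.inl j) + ρ * w j) := by
      intro j
      have h := congrFun hHv (Sum.inl j)
      simpa [hsm, Pi.smul_apply, smul_eq_mul] using h
    have E2 : ∀ j, (dv j)⁻¹ * v (Sum.inr j) - ((Aᵀ*A) *ᵥ w) j
        = lam * ((dv j)⁻¹ * v (Sum.inr j) - ρ * w j) := by
      intro j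
      have h := congrFun hHv (Sum.inr j)
      simpa [hsm, Pi.smul_apply, smul_eq_mul] using h
    by_cases hlam : lam = 1
    · exact Or.inl hlam
    right
    have hμ : lam - 1 ≠ 0 := sub_ne_zero.mpr hlam
    -- the two diagonal parts cancel
    have hq : ∀ j, (dv j)⁻¹ * v (Sum.inr j) = -((du j)⁻¹ * v (Sum.inl j)) := by
      intro j
      have h1 := E1 j
      have h2 := E2 j
      have h3 : ((du j)⁻¹ * v (Sum.inl j) + (dv j)⁻¹ * v (Sum.inr j)) * (lam - 1) = 0 := by
        linear_combination -h1 - h2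
      have h4 := (mul_eq_zero.mp h3).resolve_right hμ
      linarith
    set z : Fin n → ℝ := fun j => (du j)⁻¹ * v (Sum.inl j) with hzdef
    have hz : ∀ j, z j = (du j)⁻¹ * v (Sum.inl j) := fun j => rfl
    have hxz : ∀ j, v (Sum.inl j) = du j * z j := by
      intro j
      rw [hz, ← mul_assoc, mul_inv_cancel₀ (hdu j).ne', one_mul]
    have hyz : ∀ j, v (Sum.inr j) = -(dv j * z j) := by
      intro j
      have h1 := hq j
      rw [← hz] at h1
      have h2 : dv j ≠ 0 := (hdv j).ne'
      field_simp at h1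
      linarith
    have hwz : ∀ j, w j = (du j + dv j) * z j := by
      intro j
      rw [hwdef]
      show v (Sum.inl j) - v (Sum.inr j) = _
      rw [hxz j, hyz j]
      ring
    have hz0 : ∃ j, z j ≠ 0 := by
      by_contra h
      push_neg at h
      apply hv0
      funext i
      cases i with
      | inl j => show v (Sum.inl j) = 0; rw [hxz j, h j, mul_zero]
      | inr j => show v (Sum.inr j) = 0; rw [hyz j, h j, mul_zero, neg_zero]
    have E1' : ∀ j, ((Aᵀ*A) *ᵥ w) j - ρ * w j = (lam - 1) * (z j + ρ * w j) := by
      intro j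
      have h1 := E1 j
      rw [← hz] at h1
      linear_combination h1
    have key : ∀ j, w j * ((Aᵀ*A) *ᵥ w) j - ρ * (w j * w j)
        = (lam-1) * ((du j + dv j) * z j^2 + ρ * (w j * w j)) := by
      intro j
      have h1 := E1' j
      have h2 := hwz j
      linear_combination w j * h1 + (lam - 1) * z j * h2
    -- sum it up
    set Q2 : ℝ := ∑ j, (du j + dv j) * z j ^ 2 with hQ2
    have hND : (A *ᵥ w) ⬝ᵥ (A *ᵥ w) - ρ * (w ⬝ᵥ w)
        = (lam - 1) * (Q2 + ρ * (w ⬝ᵥ w)) := by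
      have hsum : ∑ j, (w j * ((Aᵀ*A) *ᵥ w) j - ρ * (w j * w j))
          = ∑ j, (lam-1) * ((du j + dv j) * z j^2 + ρ * (w j * w j)) :=
        Finset.sum_congr rfl fun j _ => key j
      rw [Finset.sum_sub_distrib, ← Finset.mul_sum] at hsum
      rw [← Finset.mul_sum, Finset.sum_add_distrib, ← Finset.mul_sum] at hsum
      have hdot1 : ∑ j, w j * ((Aᵀ*A) *ᵥ w) j = w ⬝ᵥ ((Aᵀ*A) *ᵥ w) := rfl
      have hdot2 : ∑ j, w j * w j = w ⬝ᵥ w := rfl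
      rw [hdot1, hdot2, dot_tA A w w] at hsum
      rw [hsum, hQ2]
    -- split the index set
    set S : Finset (Fin n) := Finset.univ.filter (fun j => (du j + dv j)⁻¹ < C) with hSdef
    have hScard : S.card = l := hl.symm
    set wS : Fin n → ℝ := fun j => if j ∈ S then w j else 0 with hwS
    set wT : Fin n → ℝ := fun j => if j ∈ S then 0 else w j with hwT
    have hwST : w = wS + wT := by
      funext j
      by_cases hj : j ∈ S <;> simp [hwS, hwT, hj]
    set s2 : ℝ := wS ⬝ᵥ wS with hs2def
    set t2 : ℝ := wT ⬝ᵥ wT with ht2def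
    have hs2nn : 0 ≤ s2 := dotProduct_self_nonneg' wS
    have ht2nn : 0 ≤ t2 := dotProduct_self_nonneg' wT
    have hww : w ⬝ᵥ w = s2 + t2 := by
      have e : ∀ j, w j * w j = wS j * wS j + wT j * wT j := by
        intro j
        by_cases hj : j ∈ S <;> simp [hwS, hwT, hj]
      calc w ⬝ᵥ w = ∑ j, w j * w j := rfl
        _ = ∑ j, (wS j * wS j + wT j * wT j) := Finset.sum_congr rfl fun j _ => e j
        _ = s2 + t2 := Finset.sum_add_distrib
    -- the submatrix bound
    set g : Fin l → Fin n := fun i => ((S.orderIsoOfFin hScard i : Fin n)) with hg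
    have hginj : Function.Injective g := by
      intro i1 i2 h
      exact (S.orderIsoOfFin hScard).injective (Subtype.ext h)
    set c : Fin l → ℝ := fun i => w (g i) with hcdef
    have hc2 : c ⬝ᵥ c = s2 := by
      have e1 : ∀ j, wS j * wS j = if j ∈ S then w j * w j else 0 := by
        intro j
        by_cases hj : j ∈ S <;> simp [hwS, hj]
      calc c ⬝ᵥ c = ∑ i, w (g i) * w (g i) := rfl
        _ = ∑ j ∈ S, w j * w j := sum_enum S hScard (fun j => w j * w j)
        _ = ∑ j, (if j ∈ S then w j * w j else 0) := by
            rw [Finset.sum_ite_mem, Finset.univ_inter]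
        _ = ∑ j, wS j * wS j := Finset.sum_congr rfl fun j _ => (e1 j).symm
        _ = s2 := rfl
    have hAwS : A *ᵥ wS = (A.submatrix id g) *ᵥ c := by
      funext i
      have e1 : ∀ j, A i j * wS j = if j ∈ S then A i j * w j else 0 := by
        intro j
        by_cases hj : j ∈ S <;> simp [hwS, hj]
      calc (A *ᵥ wS) i = ∑ j, A i j * wS j := rfl
        _ = ∑ j, (if j ∈ S then A i j * w j else 0) := Finset.sum_congr rfl fun j _ => e1 j
        _ = ∑ j ∈ S, A i j * w j := by rw [Finset.sum_ite_mem, Finset.univ_inter]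
        _ = ∑ k, A i (g k) * w (g k) := (sum_enum S hScard (fun j => A i j * w j)).symm
        _ = ((A.submatrix id g) *ᵥ c) i := rfl
    set Q : ℝ := (A *ᵥ wS) ⬝ᵥ (A *ᵥ wS) with hQdef
    have hrip := rip A hP2 g hginj c
    rw [← hAwS, hc2, ← hQdef] at hrip
    have hQnn : 0 ≤ Q := dotProduct_self_nonneg' _
    have hρinv : ρ * ((n:ℝ)/m) = 1 := by
      rw [hρdef]
      field_simp
    have hQub : Q ≤ ρ*(1+δl)*s2 := by
      have h1 : ((n:ℝ)/m) * Q - s2 ≤ δl * s2 := le_of_abs_le hrip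
      have h2 : ρ * (((n:ℝ)/m) * Q) ≤ ρ * (s2 + δl * s2) := by
        apply mul_le_mul_of_nonneg_left _ hρ0.le
        linarith
      rw [← mul_assoc, hρinv, one_mul] at h2
      nlinarith
    have hQlb : ρ*(1-δl)*s2 ≤ Q := by
      have h1 : -(δl * s2) ≤ ((n:ℝ)/m) * Q - s2 := neg_le_of_abs_le hrip
      have h2 : ρ * (s2 - δl * s2) ≤ ρ * (((n:ℝ)/m) * Q) := by
        apply mul_le_mul_of_nonneg_left _ hρ0.le
        linarith
      rw [← mul_assoc, hρinv, one_mul] at h2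
      nlinarith
    have hQT : (A *ᵥ wT) ⬝ᵥ (A *ᵥ wT) ≤ t2 := contraction A hortho wT
    have hQTnn : 0 ≤ (A *ᵥ wT) ⬝ᵥ (A *ᵥ wT) := dotProduct_self_nonneg' _
    set cross : ℝ := (A *ᵥ wS) ⬝ᵥ (A *ᵥ wT) with hcross
    have hcross2 : cross^2 ≤ Q * ((A *ᵥ wT) ⬝ᵥ (A *ᵥ wT)) := by
      have h := Finset.sum_mul_sq_le_sq_mul_sq Finset.univ (A *ᵥ wS) (A *ᵥ wT)
      have e1 : ∑ i, (A *ᵥ wS) i ^ 2 = Q := by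
        rw [hQdef, dotProduct]
        exact Finset.sum_congr rfl fun i _ => pow_two _
      have e2 : ∑ i, (A *ᵥ wT) i ^ 2 = (A *ᵥ wT) ⬝ᵥ (A *ᵥ wT) := by
        rw [dotProduct]
        exact Finset.sum_congr rfl fun i _ => pow_two _
      rw [e1, e2] at h
      exact h
    -- expansion of the numerator
    have hAw : A *ᵥ w = A *ᵥ wS + A *ᵥ wT := by rw [hwST, Matrix.mulVec_add]
    have hN1 : (A *ᵥ w) ⬝ᵥ (A *ᵥ w) = Q + 2*cross + (A *ᵥ wT) ⬝ᵥ (A *ᵥ wT) := by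
      rw [hAw, dotProduct_add, add_dotProduct, add_dotProduct, ← hQdef, ← hcross,
        dotProduct_comm (A *ᵥ wT) (A *ᵥ wS), ← hcross]
      ring
    set s : ℝ := Real.sqrt s2 with hsdef
    set t : ℝ := Real.sqrt t2 with htdef
    have hs2 : s^2 = s2 := Real.sq_sqrt hs2nn
    have ht2 : t^2 = t2 := Real.sq_sqrt ht2nn
    have hsnn : 0 ≤ s := Real.sqrt_nonneg _
    have htnn : 0 ≤ t := Real.sqrt_nonneg _
    set a : ℝ := Real.sqrt (ρ*(1+δl)) with hadef
    have ha2 : a^2 = ρ*(1+δl) := Real.sq_sqrt (mul_nonneg hρ0.le (by linarith))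
    have hann : 0 ≤ a := Real.sqrt_nonneg _
    have hcb : |cross| ≤ a*s*t := by
      have h1 : cross^2 ≤ (a*s*t)^2 := by
        have e : (a*s*t)^2 = (ρ*(1+δl)) * s2 * t2 := by
          rw [mul_pow, mul_pow, ha2, hs2, ht2]
        rw [e]
        have hnn : 0 ≤ ρ*(1+δl)*s2 := mul_nonneg (mul_nonneg hρ0.le (by linarith)) hs2nn
        have h2 : Q * ((A *ᵥ wT) ⬝ᵥ (A *ᵥ wT)) ≤ (ρ*(1+δl)*s2) * t2 :=
          mul_le_mul hQub hQT hQTnn hnn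
        calc cross^2 ≤ Q * ((A *ᵥ wT) ⬝ᵥ (A *ᵥ wT)) := hcross2
          _ ≤ (ρ*(1+δl)*s2) * t2 := h2
          _ = ρ*(1+δl) * s2 * t2 := by ring
      calc |cross| = Real.sqrt (cross^2) := (Real.sqrt_sq_eq_abs cross).symm
        _ ≤ Real.sqrt ((a*s*t)^2) := Real.sqrt_le_sqrt h1
        _ = a*s*t := Real.sqrt_sq (mul_nonneg (mul_nonneg hann hsnn) htnn)
    have hcb1 := (abs_le.mp hcb).1
    have hcb2 := (abs_le.mp hcb).2
    -- numerator bound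
    have hNub : |(A *ᵥ w) ⬝ᵥ (A *ᵥ w) - ρ * (w ⬝ᵥ w)| ≤ ρ*δl*s^2 + 2*a*s*t + t^2 := by
      rw [abs_le]
      constructor
      · rw [hN1, hww, hs2, ht2]
        have hfact : 0 ≤ (1-ρ)*t2 := mul_nonneg (by linarith) ht2nn
        linarith [mul_nonneg hρ0.le ht2nn, hQlb, hQTnn, hcb1, hcb2,
          mul_nonneg hρ0.le hs2nn, hfact]
      · rw [hN1, hww, hs2, ht2]
        have hfact : 0 ≤ (1-ρ)*t2 := mul_nonneg (by linarith) ht2nn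
        linarith [mul_nonneg hρ0.le ht2nn, hQub, hQT, hcb1, hcb2, hfact]
    -- denominator lower bound
    have hQ2lb : C * t2 ≤ Q2 := by
      have e : ∀ j, C * (wT j * wT j) ≤ (du j + dv j) * z j^2 := by
        intro j
        have hΘ : 0 < du j + dv j := by linarith [hdu j, hdv j]
        by_cases hj : j ∈ S
        · have : wT j = 0 := by simp [hwT, hj]
          rw [this, mul_zero, mul_zero]
          positivity
        · have hwTj : wT j = w j := by simp [hwT, hj]
          have hTlb : C ≤ (du j + dv j)⁻¹ := by
            have := hj
            rw [hSdef, Finset.mem_filter] at this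
            push_neg at this
            exact this (Finset.mem_univ j)
          have hwj : w j = (du j + dv j) * z j := hwz j
          rw [hwTj]
          calc C * (w j * w j) ≤ (du j + dv j)⁻¹ * (w j * w j) :=
                mul_le_mul_of_nonneg_right hTlb (mul_self_nonneg _)
            _ = (du j + dv j) * z j^2 := by
                rw [hwj]
                field_simp
      calc C * t2 = ∑ j, C * (wT j * wT j) := by
            rw [ht2def, dotProduct, Finset.mul_sum]
        _ ≤ ∑ j, (du j + dv j) * z j^2 := Finset.sum_le_sum fun j _ => e j
        _ = Q2 := hQ2.symm
    have hD0 : 0 < Q2 + ρ * (w ⬝ᵥ w) := by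
      obtain ⟨j0, hj0⟩ := hz0
      have h1 : 0 < Q2 := by
        rw [hQ2]
        apply Finset.sum_pos'
        · intro j _
          have hΘ : 0 < du j + dv j := by linarith [hdu j, hdv j]
          positivity
        · refine ⟨j0, Finset.mem_univ j0, ?_⟩
          have hΘ : 0 < du j0 + dv j0 := by linarith [hdu j0, hdv j0]
          have h2 : 0 < z j0 ^ 2 := lt_of_le_of_ne (sq_nonneg _) (Ne.symm (pow_ne_zero 2 hj0))
          exact mul_pos hΘ h2
      have h2 : 0 ≤ ρ * (w ⬝ᵥ w) := mul_nonneg hρ0.le (dotProduct_self_nonneg' w)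
      linarith
    have hDlb : ρ*s^2 + C*t^2 ≤ Q2 + ρ * (w ⬝ᵥ w) := by
      rw [hs2, ht2, hww]
      linarith [hQ2lb, mul_nonneg hρ0.le ht2nn]
    -- put everything together
    have hmu : 0 ≤ δl + (1/4)*(3-ρ)^2/(ρ*δl*C) := by positivity
    have hfinal : |lam - 1| * (Q2 + ρ * (w ⬝ᵥ w))
        ≤ (δl + (1/4)*(3-ρ)^2/(ρ*δl*C)) * (Q2 + ρ * (w ⬝ᵥ w)) := by
      have h1 : |lam - 1| * (Q2 + ρ * (w ⬝ᵥ w))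
          = |(A *ᵥ w) ⬝ᵥ (A *ᵥ w) - ρ * (w ⬝ᵥ w)| := by
        rw [hND, abs_mul, abs_of_pos hD0]
      rw [h1]
      calc |(A *ᵥ w) ⬝ᵥ (A *ᵥ w) - ρ * (w ⬝ᵥ w)| ≤ ρ*δl*s^2 + 2*a*s*t + t^2 := hNub
        _ ≤ (δl + (1/4)*(3-ρ)^2/(ρ*δl*C)) * (ρ*s^2 + C*t^2) := by
            rw [hadef]
            exact scalar_ineq ρ δl C s t hρ0 hρhalf hδl0 hδl1 hC hsnn htnn
        _ ≤ (δl + (1/4)*(3-ρ)^2/(ρ*δl*C)) * (Q2 + ρ * (w ⬝ᵥ w)) :=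
            mul_le_mul_of_nonneg_left hDlb hmu
    have := le_of_mul_le_mul_right (by linarith [hfinal] :
      |lam - 1| * (Q2 + ρ * (w ⬝ᵥ w)) ≤ (δl + (1/4)*(3-ρ)^2/(ρ*δl*C)) * (Q2 + ρ * (w ⬝ᵥ w))) hD0
    calc |lam - 1| ≤ δl + (1/4)*(3-ρ)^2/(ρ*δl*C) := this
      _ = δl + 1 / 4 * (3 - ρ) ^ 2 / (ρ * δl * C) := by ring
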